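/- For all integers n ≥ 2 and k with 0 ≤ k ≤ n there exists a bipartite graph with left part L of size 2^n and right part R of size 2^k · n², in which every vertex of L has at most n² neighbors, and such that for every subset X ⊆ L of size t ≤ 2^k the set N(X) of all neighbors of elements of X contains at least t elements. -/

import Mathlib

set_option maxHeartbeats 1000000

open Finset

lemma key_ineq (n k t : ℕ) (hn : 2 ≤ n) (hk : k ≤ n) (ht1 : 1 ≤ t) (ht2 : t ≤ 2 ^ k) :
    2 ^ (k + 1) * ((2 ^ n).choose t * ((2 ^ k * n ^ 2).choose (t - 1) * (t - 1) ^ (t * n ^ 2)))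
      ≤ (2 ^ k * n ^ 2) ^ (t * n ^ 2) := by
  rcases eq_or_lt_of_le ht1 with h1 | h2
  · -- t = 1
    have hz : (t - 1) ^ (t * n ^ 2) = 0 := by
      rw [← h1]
      have : n ^ 2 ≠ 0 := by positivity
      simp [this]; omega
    simp [hz]
  · have ht2' : 2 ≤ t := h2
    have e1 : (2 ^ n).choose t ≤ (2 ^ n) ^ t := Nat.choose_le_pow _ _
    have e2 : (2 ^ k * n ^ 2).choose (t - 1) ≤ (2 ^ k * n ^ 2) ^ (t - 1) :=
      Nat.choose_le_pow _ _
    have e3 : (t - 1) ^ (t * n ^ 2) ≤ (2 ^ k) ^ (t * n ^ 2) :=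
      Nat.pow_le_pow_left (by omega) _
    have mid : 2 ^ (k + 1) * ((2 ^ n) ^ t * (2 ^ k * n ^ 2) ^ (t - 1)) ≤ (n ^ 2) ^ (t * n ^ 2) := by
      have b1 : (2 ^ k * n ^ 2) ^ (t - 1) ≤ (2 ^ n * n ^ 2) ^ t := by
        calc (2 ^ k * n ^ 2) ^ (t - 1) ≤ (2 ^ n * n ^ 2) ^ (t - 1) :=
              Nat.pow_le_pow_left
                (Nat.mul_le_mul_right _ (Nat.pow_le_pow_right (by norm_num) hk)) _
          _ ≤ (2 ^ n * n ^ 2) ^ t := Nat.pow_le_pow_right (by positivity) (by omega)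
      have hA : 2 * t ≤ t * n := by nlinarith
      have hB : k + 1 ≤ t * n := by nlinarith
      calc 2 ^ (k + 1) * ((2 ^ n) ^ t * (2 ^ k * n ^ 2) ^ (t - 1))
          ≤ 2 ^ (k + 1) * ((2 ^ n) ^ t * (2 ^ n * n ^ 2) ^ t) := by gcongr
        _ = 2 ^ (k + 1 + n * t + n * t) * n ^ (2 * t) := by ring
        _ ≤ n ^ (k + 1 + n * t + n * t) * n ^ (2 * t) := by
            gcongr
        _ = n ^ (k + 1 + n * t + n * t + 2 * t) := by rw [← pow_add]
        _ ≤ n ^ (2 * (t * n ^ 2)) := by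
            apply Nat.pow_le_pow_right (by omega)
            nlinarith [hA, hB, hn, ht2']
        _ = (n ^ 2) ^ (t * n ^ 2) := by rw [← pow_mul]
    calc 2 ^ (k + 1) * ((2 ^ n).choose t * ((2 ^ k * n ^ 2).choose (t - 1) * (t - 1) ^ (t * n ^ 2)))
        ≤ 2 ^ (k + 1) * ((2 ^ n) ^ t * ((2 ^ k * n ^ 2) ^ (t - 1) * (2 ^ k) ^ (t * n ^ 2))) := by
          gcongr
      _ = (2 ^ (k + 1) * ((2 ^ n) ^ t * (2 ^ k * n ^ 2) ^ (t - 1))) * (2 ^ k) ^ (t * n ^ 2) := by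
          ring
      _ ≤ (n ^ 2) ^ (t * n ^ 2) * (2 ^ k) ^ (t * n ^ 2) := by gcongr
      _ = (2 ^ k * n ^ 2) ^ (t * n ^ 2) := by rw [← mul_pow, mul_comm]

theorem offline_matchings_exist_c_two :
    ∀ n k : ℕ, 2 ≤ n → k ≤ n →
      ∃ N : Fin (2 ^ n) → Finset (Fin (2 ^ k * n ^ 2)),
        (∀ x, (N x).card ≤ n ^ 2) ∧
        ∀ X : Finset (Fin (2 ^ n)), X.card ≤ 2 ^ k →
          X.card ≤ (X.biUnion N).card := by
  intro n k hn hk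
  classical
  set m : ℕ := 2 ^ k * n ^ 2 with hm
  have hm0 : 0 < m := by positivity
  -- neighborhood map from a function
  let Nf : (Fin (2 ^ n) → Fin (n ^ 2) → Fin m) → Fin (2 ^ n) → Finset (Fin m) :=
    fun f x => Finset.image (f x) Finset.univ
  let Bad : Finset (Fin (2 ^ n) → Fin (n ^ 2) → Fin m) :=
    Finset.univ.filter (fun f => ∃ X : Finset (Fin (2 ^ n)),
      X.card ≤ 2 ^ k ∧ (X.biUnion (Nf f)).card < X.card)
  -- the union-bound covering family
  let A : Finset (Fin (2 ^ n)) × Finset (Fin m) → Finset (Fin (2 ^ n) → Fin (n ^ 2) → Fin m) :=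
    fun p => Fintype.piFinset (fun x => if x ∈ p.1
      then Fintype.piFinset (fun _ : Fin (n ^ 2) => p.2) else Finset.univ)
  have hsub : Bad ⊆ (Finset.Icc 1 (2 ^ k)).biUnion (fun t =>
      ((Finset.univ.powersetCard t) ×ˢ (Finset.univ.powersetCard (t - 1))).biUnion A) := by
    intro f hf
    simp only [Bad, mem_filter, mem_univ, true_and] at hf
    obtain ⟨X, hX1, hX2⟩ := hf
    have ht1 : 1 ≤ X.card := by omega
    obtain ⟨Y, hY1, -, hY2⟩ := Finset.exists_subsuperset_card_eq
      (Finset.subset_univ (X.biUnion (Nf f))) (n := X.card - 1) (by omega)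
      (by
        rw [Finset.card_univ, Fintype.card_fin]
        calc X.card - 1 ≤ 2 ^ k := by omega
          _ ≤ m := Nat.le_mul_of_pos_right _ (by positivity))
    refine Finset.mem_biUnion.2 ⟨X.card, Finset.mem_Icc.2 ⟨ht1, hX1⟩,
      Finset.mem_biUnion.2 ⟨(X, Y), ?_, ?_⟩⟩
    · exact Finset.mem_product.2 ⟨Finset.mem_powersetCard.2 ⟨Finset.subset_univ _, rfl⟩,
        Finset.mem_powersetCard.2 ⟨Finset.subset_univ _, hY2⟩⟩
    · refine Fintype.mem_piFinset.2 fun x => ?_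
      by_cases hx : x ∈ X
      · simp only [hx, if_true]
        refine Fintype.mem_piFinset.2 fun j => ?_
        exact hY1 (Finset.mem_biUnion.2 ⟨x, hx, Finset.mem_image.2 ⟨j, Finset.mem_univ _, rfl⟩⟩)
      · simp [hx]
  -- cardinality of each A p
  have hcardA : ∀ t, ∀ p ∈ (Finset.univ.powersetCard t) ×ˢ
      (Finset.univ.powersetCard (t - 1) : Finset (Finset (Fin m))),
      (A p).card = ((t - 1) ^ (n ^ 2)) ^ t * (m ^ (n ^ 2)) ^ (2 ^ n - t) := by
    intro t p hp
    obtain ⟨hp1, hp2⟩ := Finset.mem_product.1 hp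
    obtain ⟨-, hp1c⟩ := Finset.mem_powersetCard.1 hp1
    obtain ⟨-, hp2c⟩ := Finset.mem_powersetCard.1 hp2
    rw [Fintype.card_piFinset]
    rw [← Finset.prod_mul_prod_compl p.1]
    have e1 : ∀ x ∈ p.1, (if x ∈ p.1 then Fintype.piFinset
        (fun _ : Fin (n ^ 2) => p.2) else Finset.univ).card = (t - 1) ^ (n ^ 2) := by
      intro x hx
      simp only [hx, if_true]
      rw [Fintype.card_piFinset]
      simp [hp2c]
    have e2 : ∀ x ∈ p.1ᶜ, (if x ∈ p.1 then Fintype.piFinset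
        (fun _ : Fin (n ^ 2) => p.2) else Finset.univ).card = m ^ (n ^ 2) := by
      intro x hx
      rw [Finset.mem_compl] at hx
      simp only [hx, if_false]
      rw [Finset.card_univ]
      simp [Fintype.card_fun]
    rw [Finset.prod_congr rfl e1, Finset.prod_congr rfl e2, Finset.prod_const,
      Finset.prod_const, Finset.card_compl, hp1c, Fintype.card_fin]
  -- total bound
  have hBad : Bad.card < Fintype.card (Fin (2 ^ n) → Fin (n ^ 2) → Fin m) := by
    have hcardΩ : Fintype.card (Fin (2 ^ n) → Fin (n ^ 2) → Fin m)
        = (m ^ (n ^ 2)) ^ (2 ^ n) := by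
      simp [Fintype.card_fun]
    have step1 : Bad.card ≤ ∑ t ∈ Finset.Icc 1 (2 ^ k),
        (2 ^ n).choose t * (m.choose (t - 1) *
          (((t - 1) ^ (n ^ 2)) ^ t * (m ^ (n ^ 2)) ^ (2 ^ n - t))) := by
      refine (Finset.card_le_card hsub).trans ((Finset.card_biUnion_le).trans ?_)
      refine Finset.sum_le_sum fun t ht => ?_
      refine (Finset.card_biUnion_le).trans (le_of_eq ?_)
      rw [Finset.sum_congr rfl (hcardA t), Finset.sum_const, smul_eq_mul,
        Finset.card_product, Finset.card_powersetCard, Finset.card_powersetCard,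
        Finset.card_univ, Finset.card_univ, Fintype.card_fin, Fintype.card_fin]
      ring
    -- termwise bound
    have hterm : ∀ t ∈ Finset.Icc 1 (2 ^ k),
        2 ^ (k + 1) * ((2 ^ n).choose t * (m.choose (t - 1) *
          (((t - 1) ^ (n ^ 2)) ^ t * (m ^ (n ^ 2)) ^ (2 ^ n - t))))
          ≤ (m ^ (n ^ 2)) ^ (2 ^ n) := by
      intro t ht
      rw [Finset.mem_Icc] at ht
      have htL : t ≤ 2 ^ n := ht.2.trans (Nat.pow_le_pow_right (by norm_num) hk)
      have key := key_ineq n k t hn hk ht.1 ht.2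
      calc 2 ^ (k + 1) * ((2 ^ n).choose t * (m.choose (t - 1) *
            (((t - 1) ^ (n ^ 2)) ^ t * (m ^ (n ^ 2)) ^ (2 ^ n - t))))
          = (2 ^ (k + 1) * ((2 ^ n).choose t * (m.choose (t - 1) * (t - 1) ^ (t * n ^ 2)))) *
            m ^ ((2 ^ n - t) * n ^ 2) := by
            rw [← pow_mul, ← pow_mul, mul_comm (n ^ 2) t, mul_comm (n ^ 2) (2 ^ n - t)]
            ring
        _ ≤ m ^ (t * n ^ 2) * m ^ ((2 ^ n - t) * n ^ 2) := by
            exact Nat.mul_le_mul_right _ key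
        _ = (m ^ (n ^ 2)) ^ (2 ^ n) := by
            rw [← pow_add]
            rw [← Nat.add_mul, Nat.add_sub_cancel' htL, mul_comm (2 ^ n) (n ^ 2), pow_mul]
    have hsum : 2 ^ (k + 1) * Bad.card ≤ 2 ^ k * (m ^ (n ^ 2)) ^ (2 ^ n) := by
      calc 2 ^ (k + 1) * Bad.card
          ≤ 2 ^ (k + 1) * ∑ t ∈ Finset.Icc 1 (2 ^ k), (2 ^ n).choose t * (m.choose (t - 1) *
            (((t - 1) ^ (n ^ 2)) ^ t * (m ^ (n ^ 2)) ^ (2 ^ n - t))) :=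
            Nat.mul_le_mul_left _ step1
        _ = ∑ t ∈ Finset.Icc 1 (2 ^ k), 2 ^ (k + 1) * ((2 ^ n).choose t * (m.choose (t - 1) *
            (((t - 1) ^ (n ^ 2)) ^ t * (m ^ (n ^ 2)) ^ (2 ^ n - t)))) := Finset.mul_sum _ _ _
        _ ≤ ∑ t ∈ Finset.Icc 1 (2 ^ k), (m ^ (n ^ 2)) ^ (2 ^ n) := Finset.sum_le_sum hterm
        _ = 2 ^ k * (m ^ (n ^ 2)) ^ (2 ^ n) := by
            rw [Finset.sum_const, Nat.card_Icc, smul_eq_mul]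
            norm_num
    rw [hcardΩ]
    have hpos : 0 < (m ^ (n ^ 2)) ^ (2 ^ n) := by positivity
    have : 2 ^ k * (2 * Bad.card) ≤ 2 ^ k * (m ^ (n ^ 2)) ^ (2 ^ n) := by
      calc 2 ^ k * (2 * Bad.card) = 2 ^ (k + 1) * Bad.card := by ring
        _ ≤ _ := hsum
    have h2 : 2 * Bad.card ≤ (m ^ (n ^ 2)) ^ (2 ^ n) :=
      Nat.le_of_mul_le_mul_left this (by positivity)
    omega
  -- pick a good f
  have hnonempty : (Badᶜ : Finset _).Nonempty := by
    rw [← Finset.card_pos, Finset.card_compl]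
    omega
  obtain ⟨f, hf⟩ := hnonempty
  have hfgood : f ∉ Bad := Finset.mem_compl.1 hf
  refine ⟨Nf f, fun x => ?_, fun X hX => ?_⟩
  · calc (Nf f x).card ≤ (Finset.univ : Finset (Fin (n ^ 2))).card := Finset.card_image_le
      _ = n ^ 2 := by simp
  · by_contra hcon
    push_neg at hcon
    exact hfgood (Finset.mem_filter.2 ⟨Finset.mem_univ _, X, hX, hcon⟩)
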